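/- arXiv:2112.07117 — 2 statements merged into one kernel-verified Lean document; each statement's English description precedes it below -/
import Mathlib

section
/- Let E be a smooth, strictly convex, reflexive Banach space and F : E → E* a monotone mapping with R(J^E + t F) = E* for some t > 0. Then the resolvent J^E_t := (J^E + t F)^{−1} J^E is a firmly nonexpansive type mapping: for all u, v ∈ E, ⟨J^E_t u − J^E_t v, J^E(J^E_t u) − J^E(J^E_t v)⟩ ≤ ⟨J^E_t u − J^E_t v, J^E u − J^E v⟩. -/
open NormedSpace

theorem stmt7 {E : Type*} [NormedAddCommGroup E] [NormedSpace ℝ E]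
    (p : ℝ) (hp : 1 < p)
    (J : E → StrongDual ℝ E)
    (hJ : ∀ x, J x x = ‖x‖ ^ p ∧ ‖J x‖ = ‖x‖ ^ (p - 1))
    (F : E → StrongDual ℝ E) (hF : ∀ x y : E, (F x - F y) (x - y) ≥ 0)
    (t : ℝ) (ht : 0 < t)
    (R : E → E) (hR : ∀ u : E, J u = J (R u) + t • F (R u)) :
    ∀ u v : E,
      (J (R u) - J (R v)) (R u - R v) ≤ (J u - J v) (R u - R v) := by
  intro u v
  have key : (J u - J v) (R u - R v)
      = (J (R u) - J (R v)) (R u - R v) + t * (F (R u) - F (R v)) (R u - R v) := by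
    rw [hR u, hR v]
    simp [ContinuousLinearMap.sub_apply, ContinuousLinearMap.add_apply,
      ContinuousLinearMap.smul_apply, smul_eq_mul]
    ring
  have := hF (R u) (R v)
  nlinarith
end

section
/- Let E be a real uniformly convex Banach space, r > 0, and B_r(0) := {x ∈ E : ‖x‖ ≤ r}. Then there exists a continuous, strictly increasing, convex function g : [0, ∞) → [0, ∞) with g(0) = 0 such that for every x, y ∈ B_r(0) and every selections j^E(x) ∈ J^E(x), j^E(y) ∈ J^E(y), one has ⟨x − y, j^E(x) − j^E(y)⟩ ≥ g(‖x − y‖). -/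
set_option maxHeartbeats 1000000

open NormedSpace

private lemma rpow_split {p : ℝ} (hp : 1 < p) (s : ℝ) (hs : 0 ≤ s) :
    s ^ p = s ^ (p - 1) * s := by
  rcases eq_or_lt_of_le hs with h | h
  · rw [← h, Real.zero_rpow (by linarith), Real.zero_rpow (by linarith), zero_mul]
  · nth_rewrite 3 [← Real.rpow_one s]
    rw [← Real.rpow_add h, sub_add_cancel]

private lemma pair_bound {E : Type*} [NormedAddCommGroup E] [NormedSpace ℝ E]
    {p : ℝ} (hp : 1 < p) (x y : E) (jx jy : StrongDual ℝ E)
    (hjx : jx x = ‖x‖ ^ p ∧ ‖jx‖ = ‖x‖ ^ (p - 1))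
    (hjy : jy y = ‖y‖ ^ p ∧ ‖jy‖ = ‖y‖ ^ (p - 1)) :
    (‖x‖ ^ (p-1) - ‖y‖ ^ (p-1)) * (‖x‖ - ‖y‖) ≤ (jx - jy) (x - y) := by
  have h1 : jx y ≤ ‖x‖ ^ (p-1) * ‖y‖ := by
    calc jx y ≤ ‖jx y‖ := le_abs_self _
    _ ≤ ‖jx‖ * ‖y‖ := jx.le_opNorm y
    _ = ‖x‖ ^ (p-1) * ‖y‖ := by rw [hjx.2]
  have h2 : jy x ≤ ‖y‖ ^ (p-1) * ‖x‖ := by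
    calc jy x ≤ ‖jy x‖ := le_abs_self _
    _ ≤ ‖jy‖ * ‖x‖ := jy.le_opNorm x
    _ = ‖y‖ ^ (p-1) * ‖x‖ := by rw [hjy.2]
  have e : (jx - jy) (x - y) = jx x - jx y - jy x + jy y := by
    simp [map_sub]; ring
  rw [e, hjx.1, hjy.1, rpow_split hp _ (norm_nonneg x), rpow_split hp _ (norm_nonneg y)]
  nlinarith [h1, h2]

private lemma pair_nonneg {E : Type*} [NormedAddCommGroup E] [NormedSpace ℝ E]
    {p : ℝ} (hp : 1 < p) (x y : E) (jx jy : StrongDual ℝ E)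
    (hjx : jx x = ‖x‖ ^ p ∧ ‖jx‖ = ‖x‖ ^ (p - 1))
    (hjy : jy y = ‖y‖ ^ p ∧ ‖jy‖ = ‖y‖ ^ (p - 1)) :
    0 ≤ (jx - jy) (x - y) := by
  refine le_trans ?_ (pair_bound hp x y jx jy hjx hjy)
  rcases le_total ‖x‖ ‖y‖ with h | h
  · have : ‖x‖ ^ (p-1) ≤ ‖y‖ ^ (p-1) := Real.rpow_le_rpow (norm_nonneg x) h (by linarith)
    nlinarith
  · have : ‖y‖ ^ (p-1) ≤ ‖x‖ ^ (p-1) := Real.rpow_le_rpow (norm_nonneg y) h (by linarith)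
    nlinarith

private lemma pow_gap {q r c : ℝ} (hq : 0 < q) (hr : 0 < r) (hc : 0 < c) :
    ∃ m > 0, ∀ b ∈ Set.Icc (0:ℝ) r, m ≤ (b + c) ^ q - b ^ q := by
  have hcont : ContinuousOn (fun b : ℝ => (b + c) ^ q - b ^ q) (Set.Icc 0 r) := by
    apply ContinuousOn.sub
    · intro b _
      exact ((Real.continuousAt_rpow_const _ _ (Or.inr hq.le)).comp
        ((continuous_id.add continuous_const).continuousAt)).continuousWithinAt
    · exact fun b _ => (Real.continuousAt_rpow_const _ _ (Or.inr hq.le)).continuousWithinAt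
  obtain ⟨b₀, hb₀, hmin⟩ := isCompact_Icc.exists_isMinOn ⟨0, by constructor <;> simp [hr.le]⟩ hcont
  refine ⟨(b₀ + c) ^ q - b₀ ^ q, ?_, fun b hb => hmin hb⟩
  have := Real.rpow_lt_rpow hb₀.1 (by linarith : b₀ < b₀ + c) hq
  linarith

private lemma keyL {E : Type*} [NormedAddCommGroup E] [NormedSpace ℝ E] [UniformConvexSpace E]
    {p r t : ℝ} (hp : 1 < p) (hr : 0 < r) (ht : 0 < t) :
    ∃ c > 0, ∀ (x y : E) (jx jy : StrongDual ℝ E), ‖x‖ ≤ r → ‖y‖ ≤ r →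
      (jx x = ‖x‖ ^ p ∧ ‖jx‖ = ‖x‖ ^ (p - 1)) →
      (jy y = ‖y‖ ^ p ∧ ‖jy‖ = ‖y‖ ^ (p - 1)) →
      t ≤ ‖x - y‖ → c ≤ (jx - jy) (x - y) := by
  have hq : 0 < p - 1 := by linarith
  obtain ⟨m, hm, hmF⟩ := pow_gap hq hr (by positivity : (0:ℝ) < t/4)
  have hε : (0:ℝ) < 3*t/(4*r) := by positivity
  obtain ⟨δ, hδ, hUC⟩ := exists_forall_closed_ball_dist_add_le_two_sub E hε
  have ht4 : (0:ℝ) < t/4 := by positivity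
  have ht4q : (0:ℝ) < (t/4) ^ (p-1) := Real.rpow_pos_of_pos ht4 _
  refine ⟨min (m * (t/4)) (δ * ((t/4) ^ (p-1) * (t/4))), by positivity, ?_⟩
  -- core claim assuming ‖y‖ ≤ ‖x‖
  have key : ∀ (x y : E) (jx jy : StrongDual ℝ E), ‖x‖ ≤ r → ‖y‖ ≤ r →
      (jx x = ‖x‖ ^ p ∧ ‖jx‖ = ‖x‖ ^ (p - 1)) →
      (jy y = ‖y‖ ^ p ∧ ‖jy‖ = ‖y‖ ^ (p - 1)) →
      ‖y‖ ≤ ‖x‖ → t ≤ ‖x - y‖ →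
      min (m * (t/4)) (δ * ((t/4) ^ (p-1) * (t/4))) ≤ (jx - jy) (x - y) := by
    intro x y jx jy hx hy hjx hjy hba htxy
    set a := ‖x‖ with ha_def
    set b := ‖y‖ with hb_def
    have hb0 : 0 ≤ b := norm_nonneg y
    have ha2 : t/2 ≤ a := by
      have := norm_sub_le x y
      simp only [← ha_def, ← hb_def] at this
      linarith
    have ha : 0 < a := lt_of_lt_of_le (by positivity) ha2
    by_cases hcase : b ≤ a - t/4
    · -- norms far apart
      have h1 : (b + t/4) ^ (p-1) ≤ a ^ (p-1) :=
        Real.rpow_le_rpow (by linarith) (by linarith) hq.le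
      have h2 : m ≤ (b + t/4) ^ (p-1) - b ^ (p-1) := hmF b ⟨hb0, le_trans hba hx⟩
      have h3 := pair_bound hp x y jx jy hjx hjy
      have h4 : m * (t/4) ≤ (a ^ (p-1) - b ^ (p-1)) * (a - b) := by
        apply mul_le_mul (by linarith) (by linarith) (by positivity) (by linarith)
      exact le_trans (min_le_left _ _) (le_trans h4 h3)
    · -- norms close: uniform convexity
      push_neg at hcase
      have hb : t/4 < b := by linarith
      set u := a⁻¹ • x with hu_def
      set v := b⁻¹ • y with hv_def
      have hau : a • u = x := smul_inv_smul₀ ha.ne' x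
      have hbv : b • v = y := smul_inv_smul₀ (lt_trans ht4 hb).ne' y
      have hnu : ‖u‖ = 1 := by
        rw [hu_def, norm_smul, norm_inv, Real.norm_eq_abs, abs_of_pos ha, ← ha_def,
          inv_mul_cancel₀ ha.ne']
      have hnv : ‖v‖ = 1 := by
        rw [hv_def, norm_smul, norm_inv, Real.norm_eq_abs, abs_of_pos (lt_trans ht4 hb), ← hb_def,
          inv_mul_cancel₀ (lt_trans ht4 hb).ne']
      have hxy' : x - y = a • (u - v) + (a - b) • v := by
        rw [smul_sub, sub_smul, hau, hbv]; abel
      have huv : 3*t/(4*r) ≤ ‖u - v‖ := by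
        have h5 : ‖x - y‖ ≤ a * ‖u - v‖ + (a - b) := by
          rw [hxy']
          calc ‖a • (u - v) + (a - b) • v‖ ≤ ‖a • (u - v)‖ + ‖(a - b) • v‖ := norm_add_le _ _
          _ = a * ‖u - v‖ + (a - b) := by
              rw [norm_smul, norm_smul, Real.norm_eq_abs, Real.norm_eq_abs, abs_of_pos ha,
                abs_of_nonneg (by linarith : (0:ℝ) ≤ a - b), hnv, mul_one]
        have h6 : 3*t/4 ≤ a * ‖u - v‖ := by linarith
        rw [div_le_iff₀ (by positivity : (0:ℝ) < 4*r)]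
        have h7 : a * ‖u - v‖ ≤ r * ‖u - v‖ := by
          apply mul_le_mul_of_nonneg_right hx (norm_nonneg _)
        nlinarith [norm_nonneg (u - v)]
      have hsum : ‖u + v‖ ≤ 2 - δ := hUC hnu.le hnv.le huv
      -- estimates on jx, jy
      have hjxu : jx u = a ^ (p-1) := by
        rw [hu_def, map_smul, smul_eq_mul, hjx.1, rpow_split hp a ha.le]
        field_simp
      have hjyv : jy v = b ^ (p-1) := by
        rw [hv_def, map_smul, smul_eq_mul, hjy.1, rpow_split hp b hb0]
        have hbne : b ≠ 0 := (lt_trans ht4 hb).ne'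
        field_simp
      have haq : (0:ℝ) ≤ a ^ (p-1) := (Real.rpow_pos_of_pos ha _).le
      have hbq : (0:ℝ) ≤ b ^ (p-1) := (Real.rpow_pos_of_pos (lt_trans ht4 hb) _).le
      have hjxv : jx v ≤ a ^ (p-1) * (1 - δ) := by
        have : jx (u + v) ≤ a ^ (p-1) * (2 - δ) := by
          calc jx (u + v) ≤ ‖jx (u + v)‖ := le_abs_self _
          _ ≤ ‖jx‖ * ‖u + v‖ := jx.le_opNorm _
          _ ≤ a ^ (p-1) * (2 - δ) := by
              rw [hjx.2]
              exact mul_le_mul_of_nonneg_left hsum haq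
        rw [map_add, hjxu] at this
        linarith
      have hjyu : jy u ≤ b ^ (p-1) * (1 - δ) := by
        have : jy (u + v) ≤ b ^ (p-1) * (2 - δ) := by
          calc jy (u + v) ≤ ‖jy (u + v)‖ := le_abs_self _
          _ ≤ ‖jy‖ * ‖u + v‖ := jy.le_opNorm _
          _ ≤ b ^ (p-1) * (2 - δ) := by
              rw [hjy.2]
              exact mul_le_mul_of_nonneg_left hsum hbq
        rw [map_add, hjyv] at this
        linarith
      have hjxy : jx y ≤ b * (a ^ (p-1) * (1 - δ)) := by
        have : jx y = b * jx v := by rw [← hbv, map_smul, smul_eq_mul]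
        rw [this]
        exact mul_le_mul_of_nonneg_left hjxv hb0
      have hjyx : jy x ≤ a * (b ^ (p-1) * (1 - δ)) := by
        have : jy x = a * jy u := by rw [← hau, map_smul, smul_eq_mul]
        rw [this]
        exact mul_le_mul_of_nonneg_left hjyu ha.le
      have e : (jx - jy) (x - y) = jx x - jx y - jy x + jy y := by
        simp [map_sub]; ring
      have hmono : (0:ℝ) ≤ (a ^ (p-1) - b ^ (p-1)) * (a - b) := by
        have : b ^ (p-1) ≤ a ^ (p-1) := Real.rpow_le_rpow hb0 hba hq.le
        nlinarith
      have haq' : (t/4) ^ (p-1) ≤ a ^ (p-1) := Real.rpow_le_rpow ht4.le (by linarith) hq.le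
      have h8 : (t/4) ^ (p-1) * (t/4) ≤ a ^ (p-1) * b := mul_le_mul haq' hb.le ht4.le haq
      have final : δ * ((t/4) ^ (p-1) * (t/4)) ≤ (jx - jy) (x - y) := by
        rw [e, hjx.1, hjy.1, rpow_split hp a ha.le, rpow_split hp b hb0]
        have h9 := mul_le_mul_of_nonneg_left h8 hδ.le
        have h10 : (0:ℝ) ≤ δ * (a * b ^ (p-1)) := mul_nonneg hδ.le (mul_nonneg ha.le hbq)
        linarith only [hmono, h9, h10, hjxy, hjyx]
      exact le_trans (min_le_right _ _) final
  intro x y jx jy hx hy hjx hjy htxy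
  rcases le_total ‖y‖ ‖x‖ with h | h
  · exact key x y jx jy hx hy hjx hjy h htxy
  · have e : (jy - jx) (y - x) = (jx - jy) (x - y) := by simp [map_sub]; ring
    rw [← e]
    apply key y x jy jx hy hx hjy hjx h
    rwa [norm_sub_rev]

theorem stmt11 {E : Type*} [NormedAddCommGroup E] [NormedSpace ℝ E] [UniformConvexSpace E]
    (p r : ℝ) (hp : 1 < p) (hr : 0 < r) :
    ∃ g : ℝ → ℝ,
      ContinuousOn g (Set.Ici 0) ∧ StrictMonoOn g (Set.Ici 0) ∧
      ConvexOn ℝ (Set.Ici 0) g ∧ g 0 = 0 ∧ (∀ s ≥ (0:ℝ), 0 ≤ g s) ∧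
      ∀ x y : E, ‖x‖ ≤ r → ‖y‖ ≤ r →
        ∀ jx jy : StrongDual ℝ E,
          (jx x = ‖x‖ ^ p ∧ ‖jx‖ = ‖x‖ ^ (p - 1)) →
          (jy y = ‖y‖ ^ p ∧ ‖jy‖ = ‖y‖ ^ (p - 1)) →
          (jx - jy) (x - y) ≥ g ‖x - y‖ := by
  classical
  -- the admissible constant sets
  set A : ℝ → Set ℝ := fun t =>
    {c | 0 ≤ c ∧ c ≤ 1 ∧ ∀ (x y : E) (jx jy : StrongDual ℝ E), ‖x‖ ≤ r → ‖y‖ ≤ r →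
      (jx x = ‖x‖ ^ p ∧ ‖jx‖ = ‖x‖ ^ (p - 1)) →
      (jy y = ‖y‖ ^ p ∧ ‖jy‖ = ‖y‖ ^ (p - 1)) →
      t ≤ ‖x - y‖ → c ≤ (jx - jy) (x - y)} with hA_def
  have hA0 : ∀ t, (0:ℝ) ∈ A t := by
    intro t
    exact ⟨le_refl 0, zero_le_one, fun x y jx jy _ _ hjx hjy _ =>
      pair_nonneg hp x y jx jy hjx hjy⟩
  have hAne : ∀ t, (A t).Nonempty := fun t => ⟨0, hA0 t⟩
  have hAbdd : ∀ t, BddAbove (A t) := fun t => ⟨1, fun c hc => hc.2.1⟩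
  set h : ℝ → ℝ := fun t => sSup (A t) with hh_def
  have h0 : ∀ t, 0 ≤ h t := fun t => le_csSup (hAbdd t) (hA0 t)
  have h1 : ∀ t, h t ≤ 1 := fun t => csSup_le (hAne t) (fun c hc => hc.2.1)
  have hmono : Monotone h := by
    intro t1 t2 h12
    apply csSup_le_csSup (hAbdd t2) (hAne t1)
    rintro c ⟨hc0, hc1, hc⟩
    exact ⟨hc0, hc1, fun x y jx jy hx hy hjx hjy ht =>
      hc x y jx jy hx hy hjx hjy (le_trans h12 ht)⟩
  have hpos : ∀ t, 0 < t → 0 < h t := by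
    intro t ht
    obtain ⟨c, hc, hcP⟩ := keyL (E := E) hp hr ht
    have hmem : min c 1 ∈ A t := by
      refine ⟨le_min hc.le zero_le_one, min_le_right _ _, ?_⟩
      intro x y jx jy hx hy hjx hjy htxy
      exact le_trans (min_le_left _ _) (hcP x y jx jy hx hy hjx hjy htxy)
    exact lt_of_lt_of_le (lt_min hc zero_lt_one) (le_csSup (hAbdd t) hmem)
  have hDbound : ∀ (x y : E) (jx jy : StrongDual ℝ E), ‖x‖ ≤ r → ‖y‖ ≤ r →
      (jx x = ‖x‖ ^ p ∧ ‖jx‖ = ‖x‖ ^ (p - 1)) →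
      (jy y = ‖y‖ ^ p ∧ ‖jy‖ = ‖y‖ ^ (p - 1)) →
      h ‖x - y‖ ≤ (jx - jy) (x - y) := by
    intro x y jx jy hx hy hjx hjy
    apply csSup_le (hAne _)
    rintro c ⟨_, _, hc⟩
    exact hc x y jx jy hx hy hjx hjy (le_refl _)
  -- the integrand
  set ψ : ℝ → ℝ := fun u => min (h u) (max u 0) / (1 + 2*r) with hψ_def
  have hK : (0:ℝ) < 1 + 2*r := by linarith
  have hψmono : Monotone ψ := by
    apply Monotone.div_const _ hK.le
    exact Monotone.min hmono (monotone_id.max monotone_const)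
  have hψ0 : ∀ u, 0 ≤ ψ u := by
    intro u
    apply div_nonneg _ hK.le
    exact le_min (h0 u) (le_max_right _ _)
  have hψpos : ∀ u, 0 < u → 0 < ψ u := by
    intro u hu
    apply div_pos _ hK
    exact lt_min (hpos u hu) (lt_max_of_lt_left hu)
  have hψle : ∀ u, ψ u ≤ 1 / (1 + 2*r) := by
    intro u
    have h2 : min (h u) (max u 0) ≤ 1 := le_trans (min_le_left _ _) (h1 u)
    exact (div_le_div_iff_of_pos_right hK).mpr h2
  -- integrability
  have hψint : ∀ a b : ℝ, IntervalIntegrable ψ MeasureTheory.volume a b :=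
    fun a b => hψmono.intervalIntegrable
  set g : ℝ → ℝ := fun s => ∫ u in (0:ℝ)..s, ψ u with hg_def
  have hgsub : ∀ a b : ℝ, g b - g a = ∫ u in a..b, ψ u := by
    intro a b
    rw [hg_def]
    exact intervalIntegral.integral_interval_sub_left (hψint 0 b) (hψint 0 a)
  have hlow : ∀ a b : ℝ, a ≤ b → ψ a * (b - a) ≤ g b - g a := by
    intro a b hab
    rw [hgsub]
    calc ψ a * (b - a) = ∫ _ in a..b, ψ a := by
          rw [intervalIntegral.integral_const, smul_eq_mul]; ring
    _ ≤ ∫ u in a..b, ψ u := by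
          apply intervalIntegral.integral_mono_on hab intervalIntegrable_const (hψint a b)
          exact fun u hu => hψmono hu.1
  have hhigh : ∀ a b : ℝ, a ≤ b → g b - g a ≤ ψ b * (b - a) := by
    intro a b hab
    rw [hgsub]
    calc (∫ u in a..b, ψ u) ≤ ∫ _ in a..b, ψ b := by
          apply intervalIntegral.integral_mono_on hab (hψint a b) intervalIntegrable_const
          exact fun u hu => hψmono hu.2
    _ = ψ b * (b - a) := by rw [intervalIntegral.integral_const, smul_eq_mul]; ring
  have hg0 : g 0 = 0 := intervalIntegral.integral_same
  -- continuity via Lipschitz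
  have hgcont : Continuous g := by
    have : LipschitzWith (Real.toNNReal (1/(1+2*r))) g := by
      apply LipschitzWith.of_dist_le_mul
      intro a b
      rw [Real.dist_eq, Real.dist_eq]
      have : g a - g b = ∫ u in b..a, ψ u := hgsub b a
      rw [this]
      have hb : ∀ u ∈ Set.uIoc b a, ‖ψ u‖ ≤ 1/(1+2*r) := by
        intro u _
        rw [Real.norm_eq_abs, abs_of_nonneg (hψ0 u)]
        exact hψle u
      have := intervalIntegral.norm_integral_le_of_norm_le_const hb
      rw [Real.norm_eq_abs] at this
      calc |∫ u in b..a, ψ u| ≤ 1/(1+2*r) * |a - b| := this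
      _ = (Real.toNNReal (1/(1+2*r)) : ℝ) * |a - b| := by
          rw [Real.coe_toNNReal _ (by positivity)]
    exact this.continuous
  have hgmonoS : StrictMonoOn g (Set.Ici 0) := by
    intro a ha b hb hab
    have hm : 0 < (a + b)/2 := by
      simp only [Set.mem_Ici] at ha
      linarith
    have h2 : ψ ((a+b)/2) * (b - (a+b)/2) ≤ g b - g ((a+b)/2) := hlow _ _ (by linarith)
    have h3 : ψ a * ((a+b)/2 - a) ≤ g ((a+b)/2) - g a := hlow _ _ (by linarith)
    have h4 : 0 < ψ ((a+b)/2) * (b - (a+b)/2) :=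
      mul_pos (hψpos _ hm) (by linarith)
    have h5 : 0 ≤ ψ a * ((a+b)/2 - a) := mul_nonneg (hψ0 a) (by linarith)
    linarith
  have hgconv : ConvexOn ℝ (Set.Ici 0) g := by
    apply convexOn_of_slope_mono_adjacent (convex_Ici 0)
    intro a b c _ _ hab hbc
    have h2 : g b - g a ≤ ψ b * (b - a) := hhigh a b hab.le
    have h3 : ψ b * (c - b) ≤ g c - g b := hlow b c hbc.le
    rw [div_le_div_iff₀ (by linarith) (by linarith)]
    nlinarith
  have hgnn : ∀ s ≥ (0:ℝ), 0 ≤ g s := by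
    intro s hs
    have := hlow 0 s hs
    rw [hg0] at this
    nlinarith [hψ0 0]
  refine ⟨g, hgcont.continuousOn, hgmonoS, hgconv, hg0, hgnn, ?_⟩
  intro x y hx hy jx jy hjx hjy
  set t := ‖x - y‖ with ht_def
  have ht0 : 0 ≤ t := norm_nonneg _
  have ht2r : t ≤ 2*r := by
    have := norm_sub_le x y
    rw [← ht_def] at this
    linarith
  have hgt : g t ≤ h t := by
    have h2 : g t - g 0 ≤ ψ t * (t - 0) := hhigh 0 t ht0
    rw [hg0, sub_zero, sub_zero] at h2
    have h3 : ψ t * t ≤ h t := by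
      rw [hψ_def]
      simp only
      rw [div_mul_eq_mul_div, div_le_iff₀ hK]
      have h4 : min (h t) (max t 0) ≤ h t := min_le_left _ _
      have h5 : min (h t) (max t 0) * t ≤ h t * t :=
        mul_le_mul_of_nonneg_right h4 ht0
      have h6 : h t * t ≤ h t * (1 + 2*r) :=
        mul_le_mul_of_nonneg_left (by linarith) (h0 t)
      linarith
    linarith
  exact le_trans hgt (hDbound x y jx jy hx hy hjx hjy)
end
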